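/- There is an absolute constant c > 0 such that for all integers d, r ≥ 1 and every subset U ⊆ X with |U| ≥ 400r the following holds. With the convention π(0) = 1, choose (π,a) uniformly at random from {1,2}^d × {0,1}^d. Then Pr[ |{i ∈ {1,…,d} : a_i = 1 and x^{(i)}_{π(i−1),π(i)} ∈ U}| ≤ 4r ] ≤ 2^{−c·r}. -/

import Mathlib

open MvPolynomial

/-- The variable set `X = {x^(i)_{u,v}}`: index `i ∈ Fin d`, entries `u,v ∈ Fin 2`
(value `0` of `Fin 2` represents `1`, value `1` represents `2`). -/
abbrev IMMVar (d : ℕ) : Type := Fin d × Fin 2 × Fin 2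

/-- The matrix `M^(i)` of variables. -/
noncomputable def IMMMat (F : Type) [CommSemiring F] (d : ℕ) (i : Fin d) :
    Matrix (Fin 2) (Fin 2) (MvPolynomial (IMMVar d) F) :=
  Matrix.of fun u v => X (i, u, v)

/-- The iterated matrix multiplication polynomial `IMM_d = M(1,1) + M(1,2)`,
where `M = M^(1) ⋯ M^(d)`. -/
noncomputable def IMMPoly (F : Type) [CommSemiring F] (d : ℕ) :
    MvPolynomial (IMMVar d) F :=
  (List.ofFn (IMMMat F d)).prod 0 0 + (List.ofFn (IMMMat F d)).prod 0 1

/-- `π(i−1)`, with the convention `π(0) = 1` (represented by `0 : Fin 2`). -/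
def prevOf {d : ℕ} (π : Fin d → Fin 2) (i : Fin d) : Fin 2 :=
  if _ : (i : ℕ) = 0 then 0 else π ⟨(i : ℕ) - 1, by have := i.isLt; omega⟩

namespace Stmt14Aux

/-- Sum of products of weights along the chain, restricted to chains ending at `w`. -/
noncomputable def Aval (d : ℕ) (g : Fin (d+1) → Fin 2 → Fin 2 → ℝ) (w : Fin 2) : ℝ :=
  ∑ π : Fin (d+1) → Fin 2,
    if π (Fin.last d) = w then ∏ i, g i (prevOf π i) (π i) else 0

noncomputable def Sset {d : ℕ} (g : Fin d → Fin 2 → Fin 2 → ℝ) : Finset (Fin d) :=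
  Finset.univ.filter fun i => ∃ u v, g i u v ≠ 1

def Hg {d : ℕ} (g : Fin d → Fin 2 → Fin 2 → ℝ) : Prop :=
  ∀ i u v, g i u v = 3/4 ∨ g i u v = 1

lemma Hg.le_one {d : ℕ} {g : Fin d → Fin 2 → Fin 2 → ℝ} (h : Hg g) (i u v) :
    g i u v ≤ 1 := by rcases h i u v with h' | h' <;> rw [h'] <;> norm_num

lemma Hg.ge {d : ℕ} {g : Fin d → Fin 2 → Fin 2 → ℝ} (h : Hg g) (i u v) :
    (3/4 : ℝ) ≤ g i u v := by rcases h i u v with h' | h' <;> rw [h'] <;> norm_num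

lemma prevOf_snoc {d : ℕ} (σ : Fin (d+1) → Fin 2) (x : Fin 2) (j : Fin (d+1)) :
    prevOf (Fin.snoc σ x) j.castSucc = prevOf σ j := by
  unfold prevOf
  rcases Nat.eq_zero_or_pos j.val with h | h
  · simp [h]
  · rw [dif_neg (by show ¬ (j : ℕ) = 0; omega), dif_neg (by omega)]
    have : (⟨(j.castSucc : ℕ) - 1, by have := j.castSucc.isLt; omega⟩ : Fin (d+1+1))
        = Fin.castSucc ⟨(j : ℕ) - 1, by have := j.isLt; omega⟩ := by
      simp [Fin.ext_iff]
    rw [this, Fin.snoc_castSucc]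

lemma prevOf_snoc_last {d : ℕ} (σ : Fin (d+1) → Fin 2) (x : Fin 2) :
    prevOf (Fin.snoc σ x) (Fin.last (d+1)) = σ (Fin.last d) := by
  unfold prevOf
  rw [dif_neg (by simp)]
  have : (⟨(Fin.last (d+1) : ℕ) - 1, by omega⟩ : Fin (d+1+1))
      = Fin.castSucc (Fin.last d) := by
    simp [Fin.ext_iff]
  rw [this, Fin.snoc_castSucc]

lemma prevOf_zero {d : ℕ} (π : Fin (d+1) → Fin 2) :
    prevOf π 0 = 0 := by unfold prevOf; simp

lemma fin2_cases (x : Fin 2) : x = 0 ∨ x = 1 := by omega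

lemma Aval_succ (d : ℕ) (g : Fin (d+2) → Fin 2 → Fin 2 → ℝ) (w : Fin 2) :
    Aval (d+1) g w
      = ∑ u : Fin 2, Aval d (fun j => g j.castSucc) u * g (Fin.last (d+1)) u w := by
  unfold Aval
  rw [← Equiv.sum_comp (Fin.snocEquiv (fun _ : Fin (d+2) => Fin 2))
      (fun π => if π (Fin.last (d+1)) = w then ∏ i, g i (prevOf π i) (π i) else 0)]
  rw [Fintype.sum_prod_type]
  have key : ∀ (x : Fin 2) (σ : Fin (d+1) → Fin 2),
      (if (Fin.snocEquiv (fun _ : Fin (d+2) => Fin 2) (x, σ)) (Fin.last (d+1)) = w then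
        ∏ i, g i (prevOf (Fin.snocEquiv (fun _ : Fin (d+2) => Fin 2) (x, σ)) i)
          ((Fin.snocEquiv (fun _ : Fin (d+2) => Fin 2) (x, σ)) i) else 0)
      = (if x = w then
          (∏ j : Fin (d+1), g j.castSucc (prevOf σ j) (σ j)) * g (Fin.last (d+1)) (σ (Fin.last d)) x
        else 0) := by
    intro x σ
    have hsnoc : (Fin.snocEquiv (fun _ : Fin (d+2) => Fin 2) (x, σ)) = Fin.snoc σ x := rfl
    rw [hsnoc, Fin.snoc_last]
    congr 1
    rw [Fin.prod_univ_castSucc]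
    congr 1
    · exact Finset.prod_congr rfl fun j _ => by rw [prevOf_snoc, Fin.snoc_castSucc]
    · rw [prevOf_snoc_last, Fin.snoc_last]
  simp only [key]
  have pull : ∀ x : Fin 2,
      (∑ σ : Fin (d+1) → Fin 2, if x = w then
          (∏ j : Fin (d+1), g j.castSucc (prevOf σ j) (σ j)) * g (Fin.last (d+1)) (σ (Fin.last d)) x
        else 0)
      = if x = w then (∑ σ : Fin (d+1) → Fin 2,
          (∏ j : Fin (d+1), g j.castSucc (prevOf σ j) (σ j)) * g (Fin.last (d+1)) (σ (Fin.last d)) x)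
        else 0 := by
    intro x; split <;> simp
  simp only [pull]
  rw [Finset.sum_ite_eq' Finset.univ w
      (fun x => ∑ σ : Fin (d+1) → Fin 2,
        (∏ j : Fin (d+1), g j.castSucc (prevOf σ j) (σ j)) * g (Fin.last (d+1)) (σ (Fin.last d)) x)]
  simp only [Finset.mem_univ, if_true]
  have split : ∀ σ : Fin (d+1) → Fin 2,
        (∏ j : Fin (d+1), g j.castSucc (prevOf σ j) (σ j)) * g (Fin.last (d+1)) (σ (Fin.last d)) w
        = ∑ u : Fin 2, (if σ (Fin.last d) = u then
            ∏ j : Fin (d+1), g j.castSucc (prevOf σ j) (σ j) else 0) * g (Fin.last (d+1)) u w := by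
      intro σ
      rcases fin2_cases (σ (Fin.last d)) with h | h <;>
        simp [Fin.sum_univ_two, h]
  simp only [split]
  rw [Finset.sum_comm]
  exact Finset.sum_congr rfl fun u _ => by rw [← Finset.sum_mul]

lemma Aval_zero (g : Fin 1 → Fin 2 → Fin 2 → ℝ) (w : Fin 2) : Aval 0 g w = g 0 0 w := by
  unfold Aval
  rw [← Equiv.sum_comp (Equiv.funUnique (Fin 1) (Fin 2)).symm
      (fun π => if π (Fin.last 0) = w then ∏ i, g i (prevOf π i) (π i) else 0)]
  have hval : ∀ x : Fin 2,
      (if ((Equiv.funUnique (Fin 1) (Fin 2)).symm x) (Fin.last 0) = w then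
        ∏ i, g i (prevOf ((Equiv.funUnique (Fin 1) (Fin 2)).symm x) i)
          (((Equiv.funUnique (Fin 1) (Fin 2)).symm x) i) else 0)
      = if x = w then g 0 0 x else 0 := by
    intro x
    have : ((Equiv.funUnique (Fin 1) (Fin 2)).symm x) = fun _ => x := rfl
    rw [this]
    congr 1
    rw [Fin.prod_univ_one, prevOf_zero]
  simp only [hval]
  rw [Finset.sum_ite_eq' Finset.univ w (fun x => g 0 0 x)]
  simp

lemma Aval_nonneg {d : ℕ} {g : Fin (d+1) → Fin 2 → Fin 2 → ℝ} (h : Hg g) (w : Fin 2) :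
    0 ≤ Aval d g w := by
  apply Finset.sum_nonneg
  intro π _
  split
  · exact Finset.prod_nonneg fun i _ => le_trans (by norm_num) (h.ge i _ _)
  · exact le_refl 0

lemma key : ∀ (d : ℕ) (g : Fin (d+1) → Fin 2 → Fin 2 → ℝ), Hg g →
    (∀ w, Aval d g w ≤ (2/3) * (Aval d g 0 + Aval d g 1)) ∧
    Aval d g 0 + Aval d g 1 ≤ 2^(d+1) * (23/24 : ℝ)^((Sset g).card - 1) := by
  intro d
  induction d with
  | zero =>
    intro g hg
    have h00 := hg.le_one 0 0 0
    have h01 := hg.le_one 0 0 1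
    have g00 := hg.ge 0 0 0
    have g01 := hg.ge 0 0 1
    constructor
    · intro w
      rw [Aval_zero, Aval_zero, Aval_zero]
      have := hg.le_one 0 0 w
      have := hg.ge 0 0 w
      rcases fin2_cases w with h | h <;> rw [h] <;> linarith
    · rw [Aval_zero, Aval_zero]
      have hc : (Sset g).card - 1 = 0 := by
        have h1 : (Sset g).card ≤ 1 := by
          have := Finset.card_le_univ (Sset g)
          simpa using this
        omega
      rw [hc]
      norm_num
      linarith
  | succ d ih =>
    intro g hg
    set g' : Fin (d+1) → Fin 2 → Fin 2 → ℝ := fun j => g j.castSucc with hg'def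
    have hg' : Hg g' := fun i u v => hg _ u v
    obtain ⟨ihbal, ihtot⟩ := ih g' hg'
    set B0 := Aval d g' 0 with hB0
    set B1 := Aval d g' 1 with hB1
    have hB0n : 0 ≤ B0 := Aval_nonneg hg' 0
    have hB1n : 0 ≤ B1 := Aval_nonneg hg' 1
    have hbal0 : B0 ≤ 2/3 * (B0 + B1) := ihbal 0
    have hbal1 : B1 ≤ 2/3 * (B0 + B1) := ihbal 1
    have hA : ∀ w, Aval (d+1) g w
        = B0 * g (Fin.last (d+1)) 0 w + B1 * g (Fin.last (d+1)) 1 w := by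
      intro w
      rw [Aval_succ, Fin.sum_univ_two]
    have gle : ∀ u v, g (Fin.last (d+1)) u v ≤ 1 := fun u v => hg.le_one _ u v
    have gge : ∀ u v, (3/4:ℝ) ≤ g (Fin.last (d+1)) u v := fun u v => hg.ge _ u v
    have hbalnew : ∀ w, Aval (d+1) g w ≤ 2/3 * (Aval (d+1) g 0 + Aval (d+1) g 1) := by
      intro w
      rw [hA, hA, hA]
      have l1 := gle 0 w; have l2 := gle 1 w
      have m1 := gge 0 0; have m2 := gge 0 1; have m3 := gge 1 0; have m4 := gge 1 1
      nlinarith [mul_nonneg hB0n (le_trans (by norm_num) (gge 0 w)),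
        mul_nonneg hB1n (le_trans (by norm_num) (gge 1 w))]
    refine ⟨hbalnew, ?_⟩
    have hsubcard : (Sset g).card ≤ (Sset g').card + 1 := by
      have hsub : Sset g ⊆ insert (Fin.last (d+1)) ((Sset g').image Fin.castSucc) := by
        intro i hi
        rcases Fin.eq_castSucc_or_eq_last i with ⟨j, rfl⟩ | rfl
        · apply Finset.mem_insert_of_mem
          apply Finset.mem_image_of_mem
          simpa [Sset] using (by simpa [Sset] using hi : ∃ u v, g j.castSucc u v ≠ 1)
        · exact Finset.mem_insert_self _ _
      calc (Sset g).card ≤ _ := Finset.card_le_card hsub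
        _ ≤ ((Sset g').image Fin.castSucc).card + 1 := Finset.card_insert_le _ _
        _ ≤ (Sset g').card + 1 := by
            have := Finset.card_image_le (s := Sset g') (f := Fin.castSucc)
            omega
    have hq0 : (0:ℝ) ≤ 23/24 := by norm_num
    have hq1 : (23/24:ℝ) ≤ 1 := by norm_num
    have hE : (0:ℝ) ≤ 2^(d+1) * (23/24 : ℝ)^((Sset g').card - 1) := by positivity
    rw [hA, hA]
    by_cases hlast : Fin.last (d+1) ∈ Sset g
    · obtain ⟨us, vs, hne⟩ : ∃ u v, g (Fin.last (d+1)) u v ≠ 1 := by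
        simpa [Sset] using hlast
      have hval : g (Fin.last (d+1)) us vs = 3/4 := (hg _ us vs).resolve_right hne
      have hrow : g (Fin.last (d+1)) us 0 + g (Fin.last (d+1)) us 1 ≤ 7/4 := by
        rcases fin2_cases vs with h | h <;> rw [h] at hval <;>
          [linarith [gle us 1]; linarith [gle us 0]]
      have hBstar : (1/3) * (B0 + B1) ≤ (if us = 0 then B0 else B1) := by
        rcases fin2_cases us with h | h <;> simp [h] <;> linarith
      have step1 : B0 * g (Fin.last (d+1)) 0 0 + B1 * g (Fin.last (d+1)) 1 0
          + (B0 * g (Fin.last (d+1)) 0 1 + B1 * g (Fin.last (d+1)) 1 1)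
          ≤ (23/12) * (B0 + B1) := by
        rcases fin2_cases us with h | h <;> rw [h] at hrow hBstar <;> simp at hBstar <;>
          nlinarith [gle 0 0, gle 0 1, gle 1 0, gle 1 1]
      have hexp : (Sset g).card - 1 ≤ ((Sset g').card - 1) + 1 := by omega
      have hqpow : (23/24:ℝ)^(((Sset g').card - 1) + 1) ≤ (23/24:ℝ)^((Sset g).card - 1) :=
        pow_le_pow_of_le_one hq0 hq1 hexp
      calc B0 * g (Fin.last (d+1)) 0 0 + B1 * g (Fin.last (d+1)) 1 0
          + (B0 * g (Fin.last (d+1)) 0 1 + B1 * g (Fin.last (d+1)) 1 1)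
          ≤ (23/12) * (B0 + B1) := step1
        _ ≤ (23/12) * (2^(d+1) * (23/24 : ℝ)^((Sset g').card - 1)) := by
            apply mul_le_mul_of_nonneg_left ihtot (by norm_num)
        _ = 2^(d+1+1) * (23/24 : ℝ)^(((Sset g').card - 1) + 1) := by ring
        _ ≤ 2^(d+1+1) * (23/24 : ℝ)^((Sset g).card - 1) := by
            apply mul_le_mul_of_nonneg_left hqpow (by positivity)
    · have hG1 : ∀ u v, g (Fin.last (d+1)) u v = 1 := by
        have := hlast
        simp only [Sset, Finset.mem_filter, Finset.mem_univ, true_and] at this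
        push_neg at this
        exact this
      have hcard : (Sset g).card ≤ (Sset g').card := by
        have hsub : Sset g ⊆ (Sset g').image Fin.castSucc := by
          intro i hi
          rcases Fin.eq_castSucc_or_eq_last i with ⟨j, rfl⟩ | rfl
          · apply Finset.mem_image_of_mem
            simpa [Sset] using (by simpa [Sset] using hi : ∃ u v, g j.castSucc u v ≠ 1)
          · exact absurd hi hlast
        calc (Sset g).card ≤ _ := Finset.card_le_card hsub
          _ ≤ (Sset g').card := Finset.card_image_le
      have hqpow : (23/24:ℝ)^((Sset g').card - 1) ≤ (23/24:ℝ)^((Sset g).card - 1) :=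
        pow_le_pow_of_le_one hq0 hq1 (by omega)
      simp only [hG1, mul_one]
      calc B0 + B1 + (B0 + B1) = 2 * (B0 + B1) := by ring
        _ ≤ 2 * (2^(d+1) * (23/24 : ℝ)^((Sset g').card - 1)) := by linarith
        _ = 2^(d+1+1) * (23/24 : ℝ)^((Sset g').card - 1) := by ring
        _ ≤ _ := by apply mul_le_mul_of_nonneg_left hqpow (by positivity)

lemma total_split (d : ℕ) (g : Fin (d+1) → Fin 2 → Fin 2 → ℝ) :
    ∑ π : Fin (d+1) → Fin 2, ∏ i, g i (prevOf π i) (π i) = Aval d g 0 + Aval d g 1 := by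
  unfold Aval
  rw [← Finset.sum_add_distrib]
  apply Finset.sum_congr rfl
  intro π _
  rcases fin2_cases (π (Fin.last d)) with h | h <;> simp [h]

lemma inner_sum {d : ℕ} (U : Finset (Fin d × Fin 2 × Fin 2)) (π : Fin d → Fin 2) :
    (∑ a : Fin d → Bool, ((1/2:ℝ)) ^ (Finset.univ.filter fun i : Fin d =>
        a i = true ∧ (i, prevOf π i, π i) ∈ U).card)
    = 2^d * ∏ i : Fin d, (if (i, prevOf π i, π i) ∈ U then (3/4:ℝ) else 1) := by
  have h1 : ∀ a : Fin d → Bool,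
      ((1/2:ℝ)) ^ (Finset.univ.filter fun i : Fin d =>
        a i = true ∧ (i, prevOf π i, π i) ∈ U).card
      = ∏ i : Fin d, (if a i = true ∧ (i, prevOf π i, π i) ∈ U then (1/2:ℝ) else 1) := by
    intro a
    rw [← Finset.prod_const, Finset.prod_filter]
  simp only [h1]
  rw [← Fintype.prod_sum
    (fun (i : Fin d) (b : Bool) => if b = true ∧ (i, prevOf π i, π i) ∈ U then (1/2:ℝ) else 1)]
  have h2 : ∀ i : Fin d,
      (∑ b : Bool, if b = true ∧ (i, prevOf π i, π i) ∈ U then (1/2:ℝ) else 1)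
      = 2 * (if (i, prevOf π i, π i) ∈ U then (3/4:ℝ) else 1) := by
    intro i
    rw [Fintype.sum_bool]
    by_cases h : (i, prevOf π i, π i) ∈ U <;> simp [h] <;> norm_num
  simp only [h2]
  rw [Finset.prod_mul_distrib, Finset.prod_const]
  simp

end Stmt14Aux

open Stmt14Aux

/-- there is an absolute constant `c > 0` such that for all `d, r ≥ 1`
and every `U ⊆ X` with `|U| ≥ 400r`, a uniformly random
`(π,a) ∈ {1,2}^d × {0,1}^d` (with `π(0) = 1`) satisfies
`|{i : a_i = 1 and x^(i)_{π(i−1),π(i)} ∈ U}| ≤ 4r` with probability at most `2^(−c·r)`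
(stated by counting: the number of bad pairs is at most `2^(−c·r) · 2^d · 2^d`). -/
theorem stmt_14 :
    ∃ c : ℝ, 0 < c ∧
      ∀ (d r : ℕ), 1 ≤ d → 1 ≤ r →
        ∀ U : Finset (IMMVar d), 400 * r ≤ U.card →
          (Nat.card {pa : (Fin d → Fin 2) × (Fin d → Bool) //
              (Finset.univ.filter fun i : Fin d =>
                pa.2 i = true ∧ (i, prevOf pa.1 i, pa.1 i) ∈ U).card ≤ 4 * r} : ℝ)
            ≤ (2 : ℝ) ^ (-(c * r)) * ((2 : ℝ) ^ d * (2 : ℝ) ^ d) := by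
  refine ⟨1, one_pos, ?_⟩
  intro d r hd hr U hU
  obtain ⟨m, rfl⟩ : ∃ m, d = m + 1 := ⟨d - 1, by omega⟩
  set gU : Fin (m+1) → Fin 2 → Fin 2 → ℝ :=
    fun i u v => if (i, u, v) ∈ U then (3/4 : ℝ) else 1 with hgU
  have hHg : Hg gU := by
    intro i u v
    by_cases h : (i, u, v) ∈ U <;> simp [hgU, h]
  -- card of S
  have hS : 100 * r ≤ (Sset gU).card := by
    have hsub : U ⊆ (Sset gU) ×ˢ (Finset.univ : Finset (Fin 2 × Fin 2)) := by
      intro x hx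
      rcases x with ⟨i, u, v⟩
      rw [Finset.mem_product]
      refine ⟨?_, Finset.mem_univ _⟩
      simp only [Sset, Finset.mem_filter, Finset.mem_univ, true_and]
      exact ⟨u, v, by simp [hgU, hx]; norm_num⟩
    have hle := Finset.card_le_card hsub
    rw [Finset.card_product] at hle
    have h4 : (Finset.univ : Finset (Fin 2 × Fin 2)).card = 4 := by simp
    rw [h4] at hle
    omega
  -- the counting
  have hNat : (Nat.card {pa : (Fin (m+1) → Fin 2) × (Fin (m+1) → Bool) //
      (Finset.univ.filter fun i : Fin (m+1) =>
        pa.2 i = true ∧ (i, prevOf pa.1 i, pa.1 i) ∈ U).card ≤ 4 * r} : ℝ)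
      = ((Finset.univ.filter (fun pa : (Fin (m+1) → Fin 2) × (Fin (m+1) → Bool) =>
        (Finset.univ.filter fun i : Fin (m+1) =>
          pa.2 i = true ∧ (i, prevOf pa.1 i, pa.1 i) ∈ U).card ≤ 4 * r)).card : ℝ) := by
    rw [Nat.card_eq_fintype_card, Fintype.card_subtype]
  rw [hNat]
  -- pointwise bound
  have step1 : ((Finset.univ.filter (fun pa : (Fin (m+1) → Fin 2) × (Fin (m+1) → Bool) =>
        (Finset.univ.filter fun i : Fin (m+1) =>
          pa.2 i = true ∧ (i, prevOf pa.1 i, pa.1 i) ∈ U).card ≤ 4 * r)).card : ℝ)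
      ≤ ∑ pa : (Fin (m+1) → Fin 2) × (Fin (m+1) → Bool),
          (2:ℝ)^(4*r) * (1/2:ℝ)^((Finset.univ.filter fun i : Fin (m+1) =>
            pa.2 i = true ∧ (i, prevOf pa.1 i, pa.1 i) ∈ U).card) := by
    rw [Finset.card_filter]
    push_cast
    apply Finset.sum_le_sum
    intro pa _
    by_cases h : (Finset.univ.filter fun i : Fin (m+1) =>
        pa.2 i = true ∧ (i, prevOf pa.1 i, pa.1 i) ∈ U).card ≤ 4 * r
    · rw [if_pos h]
      have h1 : ((1/2:ℝ))^(4*r) ≤ (1/2:ℝ)^((Finset.univ.filter fun i : Fin (m+1) =>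
          pa.2 i = true ∧ (i, prevOf pa.1 i, pa.1 i) ∈ U).card) :=
        pow_le_pow_of_le_one (by norm_num) (by norm_num) h
      calc (1:ℝ) = (2:ℝ)^(4*r) * (1/2:ℝ)^(4*r) := by
            rw [← mul_pow]; norm_num
        _ ≤ _ := by apply mul_le_mul_of_nonneg_left h1 (by positivity)
    · rw [if_neg h]
      positivity
  -- factor the sum
  have step2 : (∑ pa : (Fin (m+1) → Fin 2) × (Fin (m+1) → Bool),
          (2:ℝ)^(4*r) * (1/2:ℝ)^((Finset.univ.filter fun i : Fin (m+1) =>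
            pa.2 i = true ∧ (i, prevOf pa.1 i, pa.1 i) ∈ U).card))
      = (2:ℝ)^(4*r) * (2^(m+1) * (Aval m gU 0 + Aval m gU 1)) := by
    rw [← Finset.mul_sum]
    congr 1
    rw [Fintype.sum_prod_type]
    have : ∀ π : Fin (m+1) → Fin 2,
        (∑ a : Fin (m+1) → Bool, (1/2:ℝ)^((Finset.univ.filter fun i : Fin (m+1) =>
          a i = true ∧ (i, prevOf π i, π i) ∈ U).card))
        = 2^(m+1) * ∏ i : Fin (m+1), gU i (prevOf π i) (π i) := fun π => inner_sum U π
    simp only [this]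
    rw [← Finset.mul_sum, total_split]
  rw [step2] at step1
  have step4 : Aval m gU 0 + Aval m gU 1 ≤ 2^(m+1) * (23/24 : ℝ)^((Sset gU).card - 1) :=
    (key m gU hHg).2
  have step5 : ((23/24 : ℝ))^((Sset gU).card - 1) ≤ (23/24 : ℝ)^(99*r) :=
    pow_le_pow_of_le_one (by norm_num) (by norm_num) (by omega)
  have step6 : (2:ℝ)^(4*r) * (23/24 : ℝ)^(99*r) ≤ (1/2:ℝ)^r := by
    have key32 : (32:ℝ) * (23/24)^99 ≤ 1 := by norm_num
    have h1 : ((32:ℝ) * (23/24)^99)^r ≤ 1 := pow_le_one₀ (by positivity) key32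
    have h2 : ((32:ℝ) * (23/24)^99)^r
        = (2:ℝ)^(4*r) * (23/24 : ℝ)^(99*r) * 2^r := by
      rw [mul_pow, ← pow_mul]
      have : (32:ℝ) = 2^5 := by norm_num
      rw [this, ← pow_mul]
      rw [show 5*r = 4*r + r by omega, pow_add]
      ring
    rw [h2] at h1
    have hpos : (0:ℝ) < 2^r := by positivity
    rw [show ((1:ℝ)/2)^r = 1 / 2^r by rw [div_pow, one_pow], le_div_iff₀ hpos]
    linarith
  have hrpow : (2:ℝ)^(-((1:ℝ) * (r:ℕ))) = (1/2:ℝ)^r := by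
    rw [one_mul, Real.rpow_neg (by norm_num : (0:ℝ) ≤ 2), Real.rpow_natCast]
    rw [div_pow, one_pow, one_div]
  rw [hrpow]
  calc ((Finset.univ.filter (fun pa : (Fin (m+1) → Fin 2) × (Fin (m+1) → Bool) =>
        (Finset.univ.filter fun i : Fin (m+1) =>
          pa.2 i = true ∧ (i, prevOf pa.1 i, pa.1 i) ∈ U).card ≤ 4 * r)).card : ℝ)
      ≤ (2:ℝ)^(4*r) * (2^(m+1) * (Aval m gU 0 + Aval m gU 1)) := step1
    _ ≤ (2:ℝ)^(4*r) * (2^(m+1) * (2^(m+1) * (23/24 : ℝ)^((Sset gU).card - 1))) := by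
        gcongr
    _ ≤ (2:ℝ)^(4*r) * (2^(m+1) * (2^(m+1) * (23/24 : ℝ)^(99*r))) := by
        gcongr
    _ = ((2:ℝ)^(4*r) * (23/24 : ℝ)^(99*r)) * ((2:ℝ)^(m+1) * (2:ℝ)^(m+1)) := by ring
    _ ≤ (1/2:ℝ)^r * ((2:ℝ)^(m+1) * (2:ℝ)^(m+1)) := by
        gcongr
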